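/- Let Z† = Π ∪ {−η} and Z = −Z†. If α and β both belong to Z and α + β is a root, then α + β is not in Z. -/

import Mathlib

open scoped RealInnerProductSpace

/-- A reduced root system with a chosen base (set of simple roots) in a
Euclidean space, together with the (integer) coefficient function expressing
each root in the base. -/
structure RootSystemBase (V : Type) [NormedAddCommGroup V] [InnerProductSpace ℝ V] where
  Δ : Set V
  base : Finset V
  c : V → V → ℤ
  finite : Δ.Finite
  nonzero : ∀ α ∈ Δ, α ≠ (0 : V)
  neg_mem : ∀ α ∈ Δ, -α ∈ Δ
  reduced : ∀ α ∈ Δ, ∀ t : ℝ, t • α ∈ Δ → t = 1 ∨ t = -1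
  reflect_mem : ∀ α ∈ Δ, ∀ β ∈ Δ, β - (2 * ⟪β, α⟫ / ⟪α, α⟫) • α ∈ Δ
  pairing_int : ∀ α ∈ Δ, ∀ β ∈ Δ, ∃ n : ℤ, 2 * ⟪β, α⟫ / ⟪α, α⟫ = (n : ℝ)
  base_sub : (base : Set V) ⊆ Δ
  base_indep : LinearIndependent ℝ (fun α : base => (α : V))
  coeff_eq : ∀ β ∈ Δ, β = ∑ α ∈ base, (c β α : ℝ) • α
  coeff_sign : ∀ β ∈ Δ, (∀ α ∈ base, 0 ≤ c β α) ∨ (∀ α ∈ base, c β α ≤ 0)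

namespace RootSystemBase

variable {V : Type} [NormedAddCommGroup V] [InnerProductSpace ℝ V] (R : RootSystemBase V)

/-- A positive root: all coefficients in the base are nonnegative. -/
def Positive (β : V) : Prop := β ∈ R.Δ ∧ ∀ α ∈ R.base, 0 ≤ R.c β α

/-- The height (degree) of a root: the sum of its coefficients in the base. -/
def height (β : V) : ℤ := ∑ α ∈ R.base, R.c β α

/-- `η` is the highest root: it is positive and dominates every root
coefficientwise. -/
def IsHighest (η : V) : Prop :=
  R.Positive η ∧ ∀ β ∈ R.Δ, ∀ α ∈ R.base, R.c β α ≤ R.c η α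

/-- The conjugate cyclic root set `Z† = Π ∪ {−η}`. -/
def Zdag (η : V) : Set V := (R.base : Set V) ∪ {-η}

/-- The cyclic root set `Z = −Z†`. -/
def Zset (η : V) : Set V := {α : V | -α ∈ R.Zdag η}

/-- Irreducibility of the root system. -/
def Irreducible : Prop :=
  ∀ A B : Set V, A ∪ B = R.Δ → (∀ a ∈ A, ∀ b ∈ B, ⟪a, b⟫ = 0) →
    A = ∅ ∨ B = ∅

/-- The coroot of a root. -/
noncomputable def coroot (α : V) : V := (2 / ⟪α, α⟫) • α

end RootSystemBase

section Aux
open scoped Classical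
variable {V : Type} [NormedAddCommGroup V] [InnerProductSpace ℝ V]

/-- Coefficients in the base are unique, by linear independence. -/
lemma coeff_unique' (R : RootSystemBase V) {f g : V → ℝ}
    (h : ∑ α ∈ R.base, f α • α = ∑ α ∈ R.base, g α • α)
    {s : V} (hs : s ∈ R.base) : f s = g s := by
  have h0 : ∑ α ∈ R.base, (f α - g α) • α = 0 := by
    simp only [sub_smul, Finset.sum_sub_distrib, h, sub_self]
  have h1 : ∑ i ∈ R.base.attach, (f i.val - g i.val) • (i.val : V) = 0 := by
    rw [Finset.sum_attach R.base (fun x => (f x - g x) • x)]; exact h0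
  have := linearIndependent_iff'.mp R.base_indep R.base.attach
      (fun i => f i.val - g i.val) h1 ⟨s, hs⟩ (Finset.mem_attach _ _)
  have h2 : f s - g s = 0 := this
  linarith

lemma ind_sum (R : RootSystemBase V) {s : V} (hs : s ∈ R.base) :
    ∑ α ∈ R.base, (if α = s then (1 : ℝ) else 0) • α = s := by
  have he : ∀ x ∈ R.base, (if x = s then (1:ℝ) else 0) • x = if x = s then x else 0 := by
    intro x _; split <;> simp
  rw [Finset.sum_congr rfl he, Finset.sum_ite_eq' R.base s (fun x => x)]
  simp [hs]

/-- Membership in Zset means being `η` or the negative of a simple root. -/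
lemma zset_cases (R : RootSystemBase V) {η x : V} (hx : x ∈ R.Zset η) :
    x = η ∨ ∃ s ∈ R.base, x = -s := by
  rcases hx with h | h
  · exact Or.inr ⟨-x, h, (neg_neg x).symm⟩
  · left
    have h' : -x = -η := h
    simpa using congrArg Neg.neg h'

/-- The mixed case: `η + (-s)` is never in `Zset`. -/
lemma mixed_case (R : RootSystemBase V) {η : V} (hη : R.IsHighest η)
    {s : V} (hs : s ∈ R.base) : η + -s ∉ R.Zset η := by
  intro hmem
  have hηΔ : η ∈ R.Δ := hη.1.1
  have hsΔ : s ∈ R.Δ := R.base_sub hs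
  rcases zset_cases R hmem with h | ⟨w, hw, h⟩
  · -- η - s = η  →  s = 0
    have hs0 : s = 0 := by
      have : -s = (0 : V) := by
        have := h; rwa [add_eq_left] at this
      simpa using congrArg Neg.neg this
    exact R.nonzero s hsΔ hs0
  · -- η - s = -w  →  η = s - w
    have h2 : η = s - w := by
      have : η + -s + s = -w + s := congrArg (· + s) h
      simp only [neg_add_cancel, add_assoc] at this
      rw [sub_eq_add_neg, add_comm]
      simpa [add_comm] using this
    by_cases hsw : s = w
    · exact R.nonzero η hηΔ (by rw [h2, hsw, sub_self])
    · -- coefficient of η at w is -1, contradicting positivity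
      have hrepr : ∑ a ∈ R.base, (R.c η a : ℝ) • a
          = ∑ a ∈ R.base, ((if a = s then (1:ℝ) else 0) - (if a = w then (1:ℝ) else 0)) • a := by
        rw [← R.coeff_eq η hηΔ]
        simp only [sub_smul, Finset.sum_sub_distrib, ind_sum R hs, ind_sum R hw]
        exact h2
      have hc := coeff_unique' R hrepr hw
      rw [if_neg (fun e : w = s => hsw e.symm), if_pos rfl] at hc
      have hpos : (0:ℤ) ≤ R.c η w := hη.1.2 w hw
      have : (0:ℝ) ≤ (R.c η w : ℝ) := by exact_mod_cast hpos
      rw [hc] at this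
      linarith

end Aux

/-- Let Z† = Π ∪ {−η} and Z = −Z†.  If α and β both belong
to Z and α + β is a root, then α + β is not in Z. -/
theorem sum_of_cyclic_not_cyclic
    {V : Type} [NormedAddCommGroup V] [InnerProductSpace ℝ V]
    (R : RootSystemBase V) (hirr : R.Irreducible)
    {η : V} (hη : R.IsHighest η)
    {α β : V} (hα : α ∈ R.Zset η) (hβ : β ∈ R.Zset η)
    (hroot : α + β ∈ R.Δ) :
    α + β ∉ R.Zset η := by
  classical
  have hηΔ : η ∈ R.Δ := hη.1.1
  rcases zset_cases R hα with hA | ⟨s, hs, hA⟩ <;>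
    rcases zset_cases R hβ with hB | ⟨t, ht, hB⟩
  · -- α = η, β = η : 2η is not a root
    rw [hA, hB] at hroot ⊢
    have h2 : (2:ℝ) • η ∈ R.Δ := by
      have he : (2:ℝ) • η = η + η := by rw [two_smul]
      rw [he]; exact hroot
    rcases R.reduced η hηΔ 2 h2 with h | h <;> norm_num at h
  · -- α = η, β = -t
    rw [hA, hB]
    exact mixed_case R hη ht
  · -- α = -s, β = η
    rw [hA, hB, add_comm]
    exact mixed_case R hη hs
  · -- α = -s, β = -t
    rw [hA, hB] at hroot ⊢
    by_cases hst : s = t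
    · subst hst
      have h2 : (-2:ℝ) • s ∈ R.Δ := by
        have he : (-2:ℝ) • s = -s + -s := by
          rw [neg_smul, two_smul ℝ s, neg_add]
        rw [he]; exact hroot
      rcases R.reduced s (R.base_sub hs) (-2) h2 with h | h <;> norm_num at h
    · intro hmem
      rcases zset_cases R hmem with h | ⟨w, hw, h⟩
      · -- -s - t = η : contradicts positivity of η
        have h2 : ∑ a ∈ R.base, (R.c η a : ℝ) • a
            = ∑ a ∈ R.base, (-(if a = s then (1:ℝ) else 0) - (if a = t then (1:ℝ) else 0)) • a := by
          rw [← R.coeff_eq η hηΔ, ← h]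
          simp only [sub_smul, neg_smul, Finset.sum_sub_distrib, Finset.sum_neg_distrib,
            ind_sum R hs, ind_sum R ht]
          abel
        have hc := coeff_unique' R h2 hs
        rw [if_pos rfl, if_neg hst] at hc
        have hpos : (0:ℤ) ≤ R.c η s := hη.1.2 s hs
        have hpr : (0:ℝ) ≤ (R.c η s : ℝ) := by exact_mod_cast hpos
        rw [hc] at hpr
        norm_num at hpr
      · -- -s - t = -w with w simple : w = s + t, impossible
        have h2 : w = s + t := by
          have h' := congrArg Neg.neg h
          simp only [neg_neg] at h'
          rw [← h']; abel
        have hws : w ≠ s := by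
          intro e
          apply R.nonzero t (R.base_sub ht)
          have : s = s + t := by rw [← h2, e]
          exact (left_eq_add.mp this)
        have hwt : w ≠ t := by
          intro e
          apply R.nonzero s (R.base_sub hs)
          have : t = s + t := by rw [← h2, e]
          exact (right_eq_add.mp this)
        have h3 : ∑ a ∈ R.base, (if a = w then (1:ℝ) else 0) • a
            = ∑ a ∈ R.base, ((if a = s then (1:ℝ) else 0) + (if a = t then (1:ℝ) else 0)) • a := by
          simp only [add_smul, Finset.sum_add_distrib, ind_sum R hw, ind_sum R hs, ind_sum R ht]
          exact h2
        have hc := coeff_unique' R h3 hw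
        rw [if_pos rfl, if_neg hws, if_neg hwt] at hc
        norm_num at hc
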